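/- Let x ∈ ℤ^d \ {0} and let t ∈ ℝ^d be dual to x. Suppose Ξ := Σ_{y∈ℤ^d\{0}} ψ(y)·e^{−𝔰_t(y)} < ∞, and set λ̃ = min(Ξ^{−1}, 1). Then for every λ ∈ (0, λ̃), the limit ν_x(λ) = −lim_{n→∞} (1/n)·log G^KRW_λ(0, n·x) exists and equals |x| (saturation of the inverse correlation length). -/

import Mathlib

open Filter Topology

noncomputable section

/-- The canonical embedding of `ℤ^d` into `ℝ^d`. -/
def ic {d : ℕ} (y : Fin d → ℤ) : Fin d → ℝ := fun i => (y i : ℝ)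

/-- `nrm` is a norm on `ℝ^d` invariant under the symmetries of `ℤ^d`
(coordinate permutations and sign flips). -/
structure IsLatticeNorm (d : ℕ) (nrm : (Fin d → ℝ) → ℝ) : Prop where
  eq_zero : ∀ x : Fin d → ℝ, nrm x = 0 ↔ x = 0
  smul : ∀ (a : ℝ) (x : Fin d → ℝ), nrm (a • x) = |a| * nrm x
  add_le : ∀ x y : Fin d → ℝ, nrm (x + y) ≤ nrm x + nrm y
  symm : ∀ (π : Equiv.Perm (Fin d)) (ε : Fin d → ℝ), (∀ i, ε i = 1 ∨ ε i = -1) →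
      ∀ x : Fin d → ℝ, nrm (fun i => ε i * x (π i)) = nrm x

/-- `ψ` is a positive, lattice-symmetric, sub-exponential prefactor on `ℤ^d \ {0}`. -/
structure IsPrefactor (d : ℕ) (nrm : (Fin d → ℝ) → ℝ) (ψ : (Fin d → ℤ) → ℝ) : Prop where
  pos : ∀ y : Fin d → ℤ, y ≠ 0 → 0 < ψ y
  symm : ∀ (π : Equiv.Perm (Fin d)) (ε : Fin d → ℤ), (∀ i, ε i = 1 ∨ ε i = -1) →
      ∀ y : Fin d → ℤ, ψ (fun i => ε i * y (π i)) = ψ y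
  subexp : Filter.Tendsto (fun y : Fin d → ℤ => Real.log (ψ y) / nrm (ic y))
      Filter.cofinite (nhds 0)

/-- The coupling constants `J_y = ψ(y) e^{-|y|}` for `y ≠ 0`, and `J_0 = 0`. -/
def Jw {d : ℕ} (nrm : (Fin d → ℝ) → ℝ) (ψ : (Fin d → ℤ) → ℝ) (y : Fin d → ℤ) : ℝ :=
  if y = 0 then 0 else ψ y * Real.exp (-(nrm (ic y)))

/-- The killed random walk two-point function
`G^KRW_λ(x,y) = Σ_{k≥0} Σ_{y_1,…,y_k ≠ 0 : y_1+⋯+y_k = y-x} Π_i λ J_{y_i}`,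
with values in `[0,∞]`; walks are encoded by their lists of nonzero steps. -/
def KRW {d : ℕ} (lam : ℝ) (J : (Fin d → ℤ) → ℝ) (x y : Fin d → ℤ) : ENNReal :=
  ∑' l : {l : List (Fin d → ℤ) // (∀ s ∈ l, s ≠ 0) ∧ l.sum = y - x},
    (l.1.map (fun s => ENNReal.ofReal (lam * J s))).prod

/-- `icl lam J x ν` expresses that the inverse correlation length
`-lim_n (1/n) log G^KRW_λ(0, n•x)` exists and equals `ν`. -/
def icl {d : ℕ} (lam : ℝ) (J : (Fin d → ℤ) → ℝ) (x : Fin d → ℤ) (ν : ℝ) : Prop :=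
  Filter.Tendsto (fun n : ℕ => -(Real.log ((KRW lam J 0 ((n : ℤ) • x)).toReal) / (n : ℝ)))
    Filter.atTop (nhds ν)

/-- Euclidean scalar product on `ℝ^d`. -/
def dotR {d : ℕ} (t y : Fin d → ℝ) : ℝ := ∑ i, t i * y i

/-- `t` is dual to `x`: `t·x = |x|` and `t·y ≤ |y|` for all `y`. -/
def IsDual {d : ℕ} (nrm : (Fin d → ℝ) → ℝ) (t x : Fin d → ℝ) : Prop :=
  dotR t x = nrm x ∧ ∀ y : Fin d → ℝ, dotR t y ≤ nrm y

/-- The surcharge function `𝔰_t(y) = |y| - t·y` of a dual vector `t`. -/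
def scharge {d : ℕ} (nrm : (Fin d → ℝ) → ℝ) (t : Fin d → ℝ) (y : Fin d → ℤ) : ℝ :=
  nrm (ic y) - dotR t (ic y)

end

private lemma aux_tsum_tuple {β : Type*} (g : β → ENNReal) :
    ∀ n : ℕ, ∑' u : Fin n → β, ∏ i, g (u i) = (∑' b, g b) ^ n := by
  intro n
  induction n with
  | zero =>
      haveI : Unique (Fin 0 → β) := Pi.uniqueOfIsEmpty _
      rw [tsum_eq_single (default : Fin 0 → β)
        (fun u hu => (hu (Subsingleton.elim u default)).elim)]
      simp
  | succ n ih =>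
      calc ∑' u : Fin (n+1) → β, ∏ i, g (u i)
          = ∑' p : β × (Fin n → β), ∏ i, g ((Fin.consEquiv (fun _ => β)) p i) :=
            ((Fin.consEquiv (fun _ => β)).tsum_eq _).symm
        _ = ∑' p : β × (Fin n → β), g p.1 * ∏ i : Fin n, g (p.2 i) := by
            refine tsum_congr fun p => ?_
            rw [Fin.prod_univ_succ]
            simp [Fin.consEquiv]
        _ = (∑' b, g b) * ∑' u : Fin n → β, ∏ i : Fin n, g (u i) := by
            rw [ENNReal.tsum_prod (f := fun a (u : Fin n → β) => g a * ∏ i : Fin n, g (u i))]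
            simp_rw [ENNReal.tsum_mul_left, ENNReal.tsum_mul_right]
        _ = (∑' b, g b) ^ (n+1) := by rw [ih, pow_succ]; ring

private lemma aux_tsum_list {β : Type*} (g : β → ENNReal) :
    ∑' L : List β, (L.map g).prod = (1 - ∑' b, g b)⁻¹ := by
  rw [← ENNReal.tsum_geometric]
  rw [← List.equivSigmaTuple.symm.tsum_eq (fun L : List β => (L.map g).prod)]
  rw [ENNReal.tsum_sigma']
  refine tsum_congr fun n => ?_
  rw [← aux_tsum_tuple]
  refine tsum_congr fun u => ?_
  show ((List.ofFn u).map g).prod = _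
  rw [List.map_ofFn, List.prod_ofFn]
  rfl

private lemma aux_krw_le {d : ℕ} (v : Fin d → ℤ) (g' : (Fin d → ℤ) → ENNReal) :
    ∑' l : {l : List (Fin d → ℤ) // (∀ s ∈ l, s ≠ 0) ∧ l.sum = v}, (l.1.map g').prod
      ≤ (1 - ∑' b : {y : Fin d → ℤ // y ≠ 0}, g' b.1)⁻¹ := by
  set β := {y : Fin d → ℤ // y ≠ 0}
  set g : β → ENNReal := fun b => g' b.1 with hgdef
  have hlist : ∀ b : β, g b = g' b.1 := fun _ => rfl
  rw [← aux_tsum_list g]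
  set Φ : {l : List (Fin d → ℤ) // (∀ s ∈ l, s ≠ 0) ∧ l.sum = v} → List β :=
    fun l => l.1.pmap (fun a h => (⟨a, h⟩ : β)) l.2.1 with hΦ
  have hΦinj : Function.Injective Φ := by
    intro l l' h
    apply Subtype.ext
    have h1 : (Φ l).map Subtype.val = l.1 := by
      rw [hΦ, List.map_pmap]
      exact (List.pmap_eq_map (f := id) l.2.1).trans (List.map_id l.1)
    have h2 : (Φ l').map Subtype.val = l'.1 := by
      rw [hΦ, List.map_pmap]
      exact (List.pmap_eq_map (f := id) l'.2.1).trans (List.map_id l'.1)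
    rw [← h1, ← h2, h]
  have hterm : ∀ l, (l.1.map g').prod = ((Φ l).map g).prod := by
    intro l
    rw [hΦ, List.map_pmap]
    congr 1
    exact (List.pmap_eq_map (f := g') l.2.1).symm
  have heq : ∑' l : {l : List (Fin d → ℤ) // (∀ s ∈ l, s ≠ 0) ∧ l.sum = v},
      (l.1.map g').prod
      = ∑' l : {l : List (Fin d → ℤ) // (∀ s ∈ l, s ≠ 0) ∧ l.sum = v},
        ((Φ l).map g).prod := tsum_congr hterm
  rw [heq]
  exact ENNReal.tsum_comp_le_tsum_of_injective hΦinj (fun L => (L.map g).prod)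

set_option maxHeartbeats 1000000 in
theorem statement6 {d : ℕ} (hd : 1 ≤ d)
    (nrm : (Fin d → ℝ) → ℝ) (hnrm : IsLatticeNorm d nrm)
    (ψ : (Fin d → ℤ) → ℝ) (hψ : IsPrefactor d nrm ψ)
    (hJ1 : HasSum (fun y : Fin d → ℤ => Jw nrm ψ y) 1)
    (x : Fin d → ℤ) (hx : x ≠ 0)
    (t : Fin d → ℝ) (ht : IsDual nrm t (ic x))
    (Xi : ℝ)
    (hXi : HasSum (fun y : {y : Fin d → ℤ // y ≠ 0} =>
      ψ y.1 * Real.exp (-(scharge nrm t y.1))) Xi)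
    (lam : ℝ) (hlam0 : 0 < lam) (hlam1 : lam < min Xi⁻¹ 1) :
    icl lam (Jw nrm ψ) x (nrm (ic x)) := by
  classical
  obtain ⟨htx, htle⟩ := ht
  set N := nrm (ic x) with hNdef
  -- basic positivity of the norm
  have hnn : ∀ z : Fin d → ℝ, 0 ≤ nrm z := by
    intro z
    have h0 : nrm (0 : Fin d → ℝ) = 0 := (hnrm.eq_zero 0).mpr rfl
    have hneg : nrm (-z) = nrm z := by
      have := hnrm.smul (-1) z; simpa using this
    have h2 := hnrm.add_le z (-z)
    rw [add_neg_cancel, h0, hneg] at h2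
    linarith
  have hicx : ic x ≠ 0 := by
    intro h; apply hx; funext i
    have := congrFun h i
    simpa [ic] using this
  have hNpos : 0 < N :=
    lt_of_le_of_ne (hnn _) (fun h => hicx ((hnrm.eq_zero _).mp h.symm))
  have hXipos : 0 < Xi := by
    have hterm : 0 < ψ x * Real.exp (-(scharge nrm t x)) :=
      mul_pos (hψ.pos x hx) (Real.exp_pos _)
    have hle := le_hasSum hXi ⟨x, hx⟩
      (fun j _ => le_of_lt (mul_pos (hψ.pos j.1 j.2) (Real.exp_pos _)))
    linarith
  have hlamXi : lam * Xi < 1 := by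
    have h1 : lam < Xi⁻¹ := lt_of_lt_of_le hlam1 (min_le_left _ _)
    calc lam * Xi < Xi⁻¹ * Xi := mul_lt_mul_of_pos_right h1 hXipos
      _ = 1 := inv_mul_cancel₀ (ne_of_gt hXipos)
  -- linearity facts
  have ic_add : ∀ a b : Fin d → ℤ, ic (a + b) = ic a + ic b := by
    intro a b; funext i; simp [ic]
  have ic_zero : ic (0 : Fin d → ℤ) = 0 := by funext i; simp [ic]
  have ic_smul : ∀ n : ℕ, ic ((n : ℤ) • x) = (n : ℝ) • ic x := by
    intro n; funext i; simp [ic]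
  have dot_add : ∀ u v : Fin d → ℝ, dotR t (u + v) = dotR t u + dotR t v := by
    intro u v; simp [dotR, mul_add, Finset.sum_add_distrib]
  have dot_zero : dotR t (0 : Fin d → ℝ) = 0 := by simp [dotR]
  have dot_smul : ∀ (a : ℝ) (v : Fin d → ℝ), dotR t (a • v) = a * dotR t v := by
    intro a v
    simp only [dotR, Finset.mul_sum, Pi.smul_apply, smul_eq_mul]
    exact Finset.sum_congr rfl (fun i _ => by ring)
  have nrm_nsmul : ∀ n : ℕ, nrm (ic ((n : ℤ) • x)) = (n : ℝ) * N := by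
    intro n; rw [ic_smul, hnrm.smul, abs_of_nonneg (Nat.cast_nonneg n)]
  have dot_nsmul : ∀ n : ℕ, dotR t (ic ((n : ℤ) • x)) = (n : ℝ) * N := by
    intro n; rw [ic_smul, dot_smul, htx]
  -- the tilted weights
  set C : ℝ := (1 - lam * Xi)⁻¹ with hCdef
  have hCpos : 0 < C := inv_pos.mpr (by linarith)
  have hSum2 : HasSum (fun b : {y : Fin d → ℤ // y ≠ 0} =>
      lam * (ψ b.1 * Real.exp (-(scharge nrm t b.1)))) (lam * Xi) := hXi.mul_left lam
  have hS : ∑' b : {y : Fin d → ℤ // y ≠ 0},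
      ENNReal.ofReal (lam * (ψ b.1 * Real.exp (-(scharge nrm t b.1))))
        = ENNReal.ofReal (lam * Xi) := by
    have h1 := ENNReal.ofReal_tsum_of_nonneg
      (f := fun b : {y : Fin d → ℤ // y ≠ 0} =>
        lam * (ψ b.1 * Real.exp (-(scharge nrm t b.1))))
      (fun b => mul_nonneg hlam0.le (mul_nonneg (hψ.pos b.1 b.2).le (Real.exp_pos _).le))
      hSum2.summable
    rw [hSum2.tsum_eq] at h1
    exact h1.symm
  have hgeo : (1 - ENNReal.ofReal (lam * Xi))⁻¹ = ENNReal.ofReal C := by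
    rw [hCdef, ENNReal.ofReal_inv_of_pos (by linarith),
      ENNReal.ofReal_sub 1 (mul_nonneg hlam0.le hXipos.le), ENNReal.ofReal_one]
  -- the list term identity
  have hlist : ∀ l : List (Fin d → ℤ), (∀ s ∈ l, s ≠ 0) →
      (l.map (fun s => ENNReal.ofReal (lam * Jw nrm ψ s))).prod
        = ENNReal.ofReal (Real.exp (-(dotR t (ic l.sum)))) *
          (l.map (fun s => ENNReal.ofReal (lam * (ψ s * Real.exp (-(scharge nrm t s)))))).prod := by
    intro l
    induction l with
    | nil => intro _; simp [ic_zero, dot_zero]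
    | cons a l ih =>
        intro h
        have ha : a ≠ 0 := h a (by simp)
        have hl : ∀ s ∈ l, s ≠ 0 := fun s hs => h s (by simp [hs])
        have hexp : Real.exp (-(nrm (ic a)))
            = Real.exp (-(dotR t (ic a))) * Real.exp (-(scharge nrm t a)) := by
          rw [← Real.exp_add]; congr 1; rw [scharge]; ring
        have hJ : lam * Jw nrm ψ a
            = Real.exp (-(dotR t (ic a))) * (lam * (ψ a * Real.exp (-(scharge nrm t a)))) := by
          rw [Jw, if_neg ha, hexp]; ring
        simp only [List.map_cons, List.prod_cons, List.sum_cons]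
        rw [ih hl, hJ, ENNReal.ofReal_mul (Real.exp_pos _).le, ic_add, dot_add, neg_add,
          Real.exp_add, ENNReal.ofReal_mul (Real.exp_pos _).le]
        ring
  -- upper bound
  have hupper : ∀ n : ℕ, KRW lam (Jw nrm ψ) 0 ((n : ℤ) • x)
      ≤ ENNReal.ofReal (Real.exp (-((n : ℝ) * N)) * C) := by
    intro n
    rw [KRW]
    have step1 : ∀ l : {l : List (Fin d → ℤ) //
        (∀ s ∈ l, s ≠ 0) ∧ l.sum = (n : ℤ) • x - 0},
        (l.1.map (fun s => ENNReal.ofReal (lam * Jw nrm ψ s))).prod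
          = ENNReal.ofReal (Real.exp (-((n : ℝ) * N))) *
            (l.1.map (fun s => ENNReal.ofReal (lam * (ψ s * Real.exp (-(scharge nrm t s)))))).prod := by
      intro l
      have hsum : dotR t (ic ((n : ℤ) • x - 0)) = (n : ℝ) * N := by
        rw [sub_zero]; exact dot_nsmul n
      rw [hlist l.1 l.2.1, l.2.2, hsum]
    calc ∑' l : {l : List (Fin d → ℤ) // (∀ s ∈ l, s ≠ 0) ∧ l.sum = (n : ℤ) • x - 0},
          (l.1.map (fun s => ENNReal.ofReal (lam * Jw nrm ψ s))).prod
        = ∑' l : {l : List (Fin d → ℤ) // (∀ s ∈ l, s ≠ 0) ∧ l.sum = (n : ℤ) • x - 0},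
            ENNReal.ofReal (Real.exp (-((n : ℝ) * N))) *
            (l.1.map (fun s => ENNReal.ofReal (lam * (ψ s * Real.exp (-(scharge nrm t s)))))).prod :=
          tsum_congr step1
      _ = ENNReal.ofReal (Real.exp (-((n : ℝ) * N))) *
          ∑' l : {l : List (Fin d → ℤ) // (∀ s ∈ l, s ≠ 0) ∧ l.sum = (n : ℤ) • x - 0},
            (l.1.map (fun s => ENNReal.ofReal (lam * (ψ s * Real.exp (-(scharge nrm t s)))))).prod :=
          ENNReal.tsum_mul_left
      _ ≤ ENNReal.ofReal (Real.exp (-((n : ℝ) * N))) * ENNReal.ofReal C := by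
          refine mul_le_mul_right ?_ _
          refine le_trans (aux_krw_le _ _) ?_
          rw [hS, hgeo]
      _ = ENNReal.ofReal (Real.exp (-((n : ℝ) * N)) * C) :=
          (ENNReal.ofReal_mul (Real.exp_pos _).le).symm
  -- lower bound
  have hlower : ∀ n : ℕ, 1 ≤ n →
      ENNReal.ofReal (lam * (ψ ((n : ℤ) • x) * Real.exp (-((n : ℝ) * N))))
        ≤ KRW lam (Jw nrm ψ) 0 ((n : ℤ) • x) := by
    intro n hn
    have hn0 : (n : ℤ) ≠ 0 := by exact_mod_cast Nat.one_le_iff_ne_zero.mp hn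
    have hnx : (n : ℤ) • x ≠ 0 := smul_ne_zero hn0 hx
    have hmem : (∀ s ∈ [(n : ℤ) • x], s ≠ 0) ∧ ([(n : ℤ) • x] : List _).sum = (n : ℤ) • x - 0 := by
      refine ⟨?_, by simp⟩
      intro s hs; simp at hs; subst hs; exact hnx
    rw [KRW]
    refine le_trans ?_ (ENNReal.le_tsum
      (⟨[(n : ℤ) • x], hmem⟩ : {l : List (Fin d → ℤ) //
        (∀ s ∈ l, s ≠ 0) ∧ l.sum = (n : ℤ) • x - 0}))
    have hJw : Jw nrm ψ ((n : ℤ) • x) = ψ ((n : ℤ) • x) * Real.exp (-((n : ℝ) * N)) := by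
      simp only [Jw]; rw [if_neg hnx, nrm_nsmul n]
    simp only [List.map_cons, List.map_nil, List.prod_cons, List.prod_nil, mul_one, hJw]
    exact le_refl _
  -- real bounds
  have hGtop : ∀ n : ℕ, KRW lam (Jw nrm ψ) 0 ((n : ℤ) • x) ≠ ⊤ :=
    fun n => ne_top_of_le_ne_top ENNReal.ofReal_ne_top (hupper n)
  have hGub : ∀ n : ℕ, (KRW lam (Jw nrm ψ) 0 ((n : ℤ) • x)).toReal
      ≤ Real.exp (-((n : ℝ) * N)) * C :=
    fun n => ENNReal.toReal_le_of_le_ofReal (by positivity) (hupper n)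
  have hGlb : ∀ n : ℕ, 1 ≤ n →
      lam * (ψ ((n : ℤ) • x) * Real.exp (-((n : ℝ) * N)))
        ≤ (KRW lam (Jw nrm ψ) 0 ((n : ℤ) • x)).toReal :=
    fun n hn => (ENNReal.ofReal_le_iff_le_toReal (hGtop n)).mp (hlower n hn)
  have hapos : ∀ n : ℕ, 1 ≤ n →
      0 < lam * (ψ ((n : ℤ) • x) * Real.exp (-((n : ℝ) * N))) := by
    intro n hn
    have hn0 : (n : ℤ) ≠ 0 := by exact_mod_cast Nat.one_le_iff_ne_zero.mp hn
    exact mul_pos hlam0 (mul_pos (hψ.pos _ (smul_ne_zero hn0 hx)) (Real.exp_pos _))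
  -- logarithmic bounds
  have hkey : ∀ n : ℕ, 1 ≤ n →
      N - Real.log C / n ≤ -(Real.log ((KRW lam (Jw nrm ψ) 0 ((n : ℤ) • x)).toReal) / n)
      ∧ -(Real.log ((KRW lam (Jw nrm ψ) 0 ((n : ℤ) • x)).toReal) / n)
          ≤ N - (Real.log lam + Real.log (ψ ((n : ℤ) • x))) / n := by
    intro n hn
    have hnpos : (0 : ℝ) < n := by exact_mod_cast hn
    have hn0 : (n : ℤ) ≠ 0 := by exact_mod_cast Nat.one_le_iff_ne_zero.mp hn
    have hψpos : 0 < ψ ((n : ℤ) • x) := hψ.pos _ (smul_ne_zero hn0 hx)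
    set G := (KRW lam (Jw nrm ψ) 0 ((n : ℤ) • x)).toReal with hGdef
    have hG0 : 0 < G := lt_of_lt_of_le (hapos n hn) (hGlb n hn)
    have hlogub : Real.log G ≤ -((n : ℝ) * N) + Real.log C := by
      have := Real.log_le_log hG0 (hGub n)
      rwa [Real.log_mul (Real.exp_ne_zero _) (ne_of_gt hCpos), Real.log_exp] at this
    have hloglb : Real.log lam + Real.log (ψ ((n : ℤ) • x)) + -((n : ℝ) * N) ≤ Real.log G := by
      have h := Real.log_le_log (hapos n hn) (hGlb n hn)
      rw [Real.log_mul (ne_of_gt hlam0) (ne_of_gt (mul_pos hψpos (Real.exp_pos _))),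
        Real.log_mul (ne_of_gt hψpos) (Real.exp_ne_zero _), Real.log_exp] at h
      linarith
    constructor
    · have h4 : Real.log G / n ≤ (-((n : ℝ) * N) + Real.log C) / n :=
        (div_le_div_iff_of_pos_right hnpos).mpr hlogub
      have h5 : (-((n : ℝ) * N) + Real.log C) / n = -N + Real.log C / n := by
        field_simp
      rw [h5] at h4; linarith
    · have h4 : (Real.log lam + Real.log (ψ ((n : ℤ) • x)) + -((n : ℝ) * N)) / n
          ≤ Real.log G / n := (div_le_div_iff_of_pos_right hnpos).mpr hloglb
      have h5 : (Real.log lam + Real.log (ψ ((n : ℤ) • x)) + -((n : ℝ) * N)) / n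
          = (Real.log lam + Real.log (ψ ((n : ℤ) • x))) / n + -N := by
        field_simp
      rw [h5] at h4; linarith
  -- limits of the bounding sequences
  have hlowlim : Tendsto (fun n : ℕ => N - Real.log C / n) atTop (nhds N) := by
    have := (tendsto_const_nhds (x := N)).sub (tendsto_const_div_atTop_nhds_zero_nat (Real.log C))
    simpa using this
  have hinj : Function.Injective (fun n : ℕ => (n : ℤ) • x) := by
    intro m n h
    obtain ⟨i, hi⟩ : ∃ i, x i ≠ 0 := by
      by_contra hc; push_neg at hc; exact hx (funext hc)
    have h2 := congrFun h i
    simp only [Pi.smul_apply, smul_eq_mul] at h2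
    have h3 : (m : ℤ) = (n : ℤ) := mul_right_cancel₀ hi h2
    exact_mod_cast h3
  have hcof : Tendsto (fun n : ℕ => (n : ℤ) • x) atTop Filter.cofinite := by
    rw [← Nat.cofinite_eq_atTop]; exact hinj.tendsto_cofinite
  have hsub : Tendsto (fun n : ℕ => Real.log (ψ ((n : ℤ) • x)) / nrm (ic ((n : ℤ) • x)))
      atTop (nhds 0) := hψ.subexp.comp hcof
  have hpsilim : Tendsto (fun n : ℕ => Real.log (ψ ((n : ℤ) • x)) / n) atTop (nhds 0) := by
    have h := hsub.mul_const N
    rw [zero_mul] at h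
    refine h.congr' ?_
    filter_upwards [Filter.eventually_ge_atTop 1] with n hn
    have hnpos : (0 : ℝ) < n := by exact_mod_cast hn
    rw [nrm_nsmul]
    field_simp
  have huplim : Tendsto (fun n : ℕ => N - (Real.log lam + Real.log (ψ ((n : ℤ) • x))) / n)
      atTop (nhds N) := by
    have h1 : Tendsto (fun n : ℕ => (Real.log lam + Real.log (ψ ((n : ℤ) • x))) / n)
        atTop (nhds 0) := by
      have h2 := (tendsto_const_div_atTop_nhds_zero_nat (Real.log lam)).add hpsilim
      rw [add_zero] at h2
      refine h2.congr fun n => ?_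
      rw [← add_div]
    have := (tendsto_const_nhds (x := N)).sub h1
    simpa using this
  rw [icl]
  refine tendsto_of_tendsto_of_tendsto_of_le_of_le' hlowlim huplim ?_ ?_
  · filter_upwards [Filter.eventually_ge_atTop 1] with n hn
    exact (hkey n hn).1
  · filter_upwards [Filter.eventually_ge_atTop 1] with n hn
    exact (hkey n hn).2
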